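/- Let A be a real m×n matrix, y ∈ ℝ^m, δ ≥ 0, and x ∈ ℝ^n with x ≠ 0 and Ax ≠ y. Define the rank-one matrix ΔA = δ·(Ax − y)xᵀ / (‖y − Ax‖₂·‖x‖₂). Then ‖ΔA‖₂ = δ and ‖y − (A + ΔA)x‖₂ = ‖y − Ax‖₂ + δ‖x‖₂; in particular ΔA attains the upper bound ‖y − Ax‖₂ + δ‖x‖₂ on the worst-case residual. -/

import Mathlib

open Matrix

/-- The spectral norm of a real `m × n` matrix: the operator norm of the induced
linear map between Euclidean spaces. -/
noncomputable def matSpectralNorm {m n : ℕ} (A : Matrix (Fin m) (Fin n) ℝ) : ℝ :=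
  ‖LinearMap.toContinuousLinearMap (Matrix.toEuclideanLin A)‖

/-- The rank-one perturbation `ΔA = δ (Ax − y) xᵀ / (‖y − Ax‖₂ ‖x‖₂)` has spectral norm `δ`
and attains the worst-case residual bound:
`‖y − (A + ΔA)x‖₂ = ‖y − Ax‖₂ + δ‖x‖₂`. -/
theorem stmt_1 (m n : ℕ) (A : Matrix (Fin m) (Fin n) ℝ)
    (y : EuclideanSpace ℝ (Fin m)) (δ : ℝ) (hδ : 0 ≤ δ)
    (x : EuclideanSpace ℝ (Fin n)) (hx : x ≠ 0) (hAx : Matrix.toEuclideanLin A x ≠ y)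
    (ΔA : Matrix (Fin m) (Fin n) ℝ)
    (hΔA : ΔA = Matrix.of fun i j =>
      δ * ((Matrix.toEuclideanLin A x - y) i * x j) /
        (‖y - Matrix.toEuclideanLin A x‖ * ‖x‖)) :
    matSpectralNorm ΔA = δ ∧
      ‖y - Matrix.toEuclideanLin (A + ΔA) x‖ = ‖y - Matrix.toEuclideanLin A x‖ + δ * ‖x‖ := by
  set u : EuclideanSpace ℝ (Fin m) := Matrix.toEuclideanLin A x - y with hu
  have hune : u ≠ 0 := sub_ne_zero.mpr hAx
  have hr : (0:ℝ) < ‖u‖ := norm_pos_iff.mpr hune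
  have hs : (0:ℝ) < ‖x‖ := norm_pos_iff.mpr hx
  have hyAx : ‖y - Matrix.toEuclideanLin A x‖ = ‖u‖ := by
    rw [hu, ← norm_neg]; congr 1; abel
  set c : ℝ := δ / (‖u‖ * ‖x‖) with hc
  have hc0 : 0 ≤ c := div_nonneg hδ (by positivity)
  have hΔA' : ΔA = Matrix.of fun i j => (c * u i) * x j := by
    rw [hΔA]
    ext i j
    simp only [Matrix.of_apply]
    rw [hyAx, hc]
    ring
  -- action of ΔA
  have key : ∀ z : EuclideanSpace ℝ (Fin n),
      Matrix.toEuclideanLin ΔA z = (c * (inner ℝ x z : ℝ)) • u := by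
    intro z
    ext i
    simp only [Matrix.toEuclideanLin_apply, hΔA']
    simp only [PiLp.toLp_apply, Matrix.mulVec,
      dotProduct, Matrix.of_apply,
      PiLp.inner_apply, RCLike.inner_apply, conj_trivial, PiLp.smul_apply, smul_eq_mul]
    rw [Finset.mul_sum, Finset.sum_mul]
    refine Finset.sum_congr rfl fun j _ => ?_
    ring
  -- ΔA applied to x
  have hinxx : (inner ℝ x x : ℝ) = ‖x‖ ^ 2 := real_inner_self_eq_norm_sq x
  have keyx : Matrix.toEuclideanLin ΔA x = (δ * ‖x‖ / ‖u‖) • u := by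
    rw [key x, hinxx, hc]
    congr 1
    field_simp
  constructor
  · apply le_antisymm
    · apply ContinuousLinearMap.opNorm_le_bound _ hδ
      intro z
      rw [LinearMap.coe_toContinuousLinearMap', key z, norm_smul]
      have : |(inner ℝ x z : ℝ)| ≤ ‖x‖ * ‖z‖ := abs_real_inner_le_norm x z
      calc ‖c * (inner ℝ x z : ℝ)‖ * ‖u‖ ≤ (c * (‖x‖ * ‖z‖)) * ‖u‖ := by
            apply mul_le_mul_of_nonneg_right _ (norm_nonneg u)
            rw [Real.norm_eq_abs, abs_mul, abs_of_nonneg hc0]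
            exact mul_le_mul_of_nonneg_left this hc0
        _ = δ * ‖z‖ := by rw [hc]; field_simp
    · have hTx : ‖LinearMap.toContinuousLinearMap (Matrix.toEuclideanLin ΔA) x‖ = δ * ‖x‖ := by
        rw [LinearMap.coe_toContinuousLinearMap', keyx, norm_smul, Real.norm_eq_abs,
          abs_of_nonneg (by positivity)]
        field_simp
      have := ContinuousLinearMap.le_opNorm
        (LinearMap.toContinuousLinearMap (Matrix.toEuclideanLin ΔA)) x
      rw [hTx] at this
      exact le_of_mul_le_mul_right this hs
  · have : y - Matrix.toEuclideanLin (A + ΔA) x = -(1 + δ * ‖x‖ / ‖u‖) • u := by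
      rw [map_add, LinearMap.add_apply, keyx, hu]
      module
    rw [this, norm_smul, Real.norm_eq_abs, abs_neg, abs_of_nonneg (by positivity), hyAx]
    field_simp
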